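/- Let A be a unital associative finite-dimensional algebra over a field F of characteristic zero. Then there exists a natural number N such that R^N = 0 (the N-fold composition of R is the zero map) for every Rota–Baxter operator R of weight 0 on A. -/

import Mathlib

open Polynomial Module

section
variable {F A : Type*} [Field F] [CharZero F] [Ring A] [Algebra F A]

lemma rb_one_mul (R : A →ₗ[F] A)
    (hR : ∀ x y : A, R x * R y = R (R x * y + x * R y)) (x : A) :
    R 1 * R x = R (R 1 * x) + R (R x) := by
  simpa [map_add] using hR 1 x

lemma rb_pow_one (R : A →ₗ[F] A)
    (hR : ∀ x y : A, R x * R y = R (R x * y + x * R y)) :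
    ∀ k : ℕ, R ((R 1) ^ k) = (((k + 1 : ℕ) : F))⁻¹ • (R 1) ^ (k + 1) := by
  intro k
  induction k with
  | zero => simp
  | succ k ih =>
    set r := R 1 with hr
    have hc : ((k + 1 : ℕ) : F) ≠ 0 := Nat.cast_ne_zero.mpr (Nat.succ_ne_zero k)
    have h1 := rb_one_mul R hR (r ^ k)
    rw [ih, map_smul] at h1
    have hL : r * (((k + 1 : ℕ) : F))⁻¹ • r ^ (k + 1)
        = (((k + 1 : ℕ) : F))⁻¹ • r ^ (k + 2) := by
      rw [mul_smul_comm]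
      congr 1
      rw [← pow_succ']
    have hRe : r * r ^ k = r ^ (k + 1) := (pow_succ' r k).symm
    rw [hL, hRe] at h1
    -- h1 : (k+1)⁻¹ • r^(k+2) = R (r^(k+1)) + (k+1)⁻¹ • R (r^(k+1))
    have h2 : r ^ (k + 2) = ((k + 1 : ℕ) : F) • (R (r ^ (k + 1)) + ((k + 1 : ℕ) : F)⁻¹ • R (r ^ (k + 1))) := by
      rw [← h1, smul_smul, mul_inv_cancel₀ hc, one_smul]
    rw [smul_add, smul_smul, mul_inv_cancel₀ hc, one_smul] at h2
    have h3 : r ^ (k + 2) = ((k + 1 + 1 : ℕ) : F) • R (r ^ (k + 1)) := by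
      rw [h2]
      push_cast
      module
    have hc2 : ((k + 1 + 1 : ℕ) : F) ≠ 0 := Nat.cast_ne_zero.mpr (by omega)
    rw [h3, smul_smul, inv_mul_cancel₀ hc2, one_smul]

end

section
variable {F A : Type*} [Field F] [CharZero F] [Ring A] [Algebra F A]

lemma rb_one_nilpotent [FiniteDimensional F A] (R : A →ₗ[F] A)
    (hR : ∀ x y : A, R x * R y = R (R x * y + x * R y)) :
    IsNilpotent (R 1) := by
  by_cases hsub : Subsingleton A
  · exact ⟨1, by rw [pow_one]; exact Subsingleton.elim _ _⟩
  have : Nontrivial A := not_subsingleton_iff_nontrivial.mp hsub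
  set r := R 1 with hrr
  have hint : IsIntegral F r := IsIntegral.of_finite F r
  set p := minpoly F r with hp
  set m := p.natDegree with hm
  have hm1 : 0 < m := minpoly.natDegree_pos hint
  have hmonic : p.Monic := minpoly.monic hint
  -- the "antiderivative" of p
  set q : F[X] := ∑ i ∈ Finset.range (m + 1), C (p.coeff i / ((i + 1 : ℕ) : F)) * X ^ (i + 1) with hq
  have hq0 : q.coeff 0 = 0 := by
    simp [hq, coeff_X_pow]
  have hqc : ∀ k : ℕ, q.coeff (k + 1) = p.coeff k / ((k + 1 : ℕ) : F) := by
    intro k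
    rw [hq, finset_sum_coeff]
    simp only [coeff_C_mul, coeff_X_pow]
    rcases lt_or_ge k (m + 1) with h | h
    · rw [Finset.sum_eq_single k (fun b _ hb => by rw [if_neg (by omega), mul_zero])
        (fun hk => absurd (Finset.mem_range.mpr h) hk), if_pos rfl, mul_one]
    · rw [coeff_eq_zero_of_natDegree_lt (show p.natDegree < k by omega), zero_div]
      exact Finset.sum_eq_zero fun b hb => by
        rw [if_neg (by have := Finset.mem_range.mp hb; omega), mul_zero]
  -- q annihilates r
  have haq : (aeval r) q = 0 := by
    have h0 : R ((aeval r) p) = 0 := by rw [minpoly.aeval, map_zero]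
    rw [aeval_eq_sum_range, map_sum] at h0
    rw [hq, map_sum]
    rw [← h0, ← hm]
    refine Finset.sum_congr rfl fun i _ => ?_
    rw [map_smul, rb_pow_one R hR i, map_mul, map_pow, aeval_C, aeval_X,
      smul_smul, ← Algebra.smul_def, div_eq_mul_inv]
  have hdvd : p ∣ q := minpoly.dvd F r haq
  have hcm1 : ((m + 1 : ℕ) : F) ≠ 0 := Nat.cast_ne_zero.mpr (by omega)
  have hqm : q.coeff (m + 1) = ((m + 1 : ℕ) : F)⁻¹ := by
    rw [hqc m, hmonic.coeff_natDegree, one_div]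
  have hqne : q ≠ 0 := fun h => by
    rw [h, coeff_zero] at hqm
    exact (inv_ne_zero hcm1) hqm.symm
  obtain ⟨l, hl⟩ := hdvd
  have hlne : l ≠ 0 := fun h => hqne (by rw [hl, h, mul_zero])
  have hqdeg : q.natDegree ≤ m + 1 := by
    refine natDegree_sum_le_of_forall_le _ _ fun i hi => ?_
    refine le_trans (natDegree_C_mul_le _ _) ?_
    rw [natDegree_X_pow]
    exact Nat.add_le_add_right (Nat.lt_succ_iff.mp (Finset.mem_range.mp hi)) 1
  have hldeg : l.natDegree ≤ 1 := by
    have := natDegree_mul (hmonic.ne_zero) hlne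
    rw [← hl] at this
    omega
  have hlform := eq_X_add_C_of_natDegree_le_one hldeg
  set c := l.coeff 1 with hc
  set d := l.coeff 0 with hd
  have hqform : q = (p * C c) * X + p * C d := by
    rw [hl, hlform, mul_add, mul_assoc]
  have hE : ∀ i : ℕ, p.coeff i / ((i + 1 : ℕ) : F) = p.coeff i * c + p.coeff (i + 1) * d := by
    intro i
    have := congrArg (fun f => Polynomial.coeff f (i + 1)) hqform
    simpa [coeff_mul_X, coeff_mul_C, hqc i] using this
  have hE0 : p.coeff 0 * d = 0 := by
    have := congrArg (fun f => Polynomial.coeff f 0) hqform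
    simpa [coeff_mul_X_zero, coeff_mul_C, hq0] using this
  have hcval : c = ((m + 1 : ℕ) : F)⁻¹ := by
    have := hE m
    rw [hmonic.coeff_natDegree, coeff_eq_zero_of_natDegree_lt (by omega), zero_mul,
      add_zero, one_mul, one_div] at this
    exact this.symm
  have hzero : ∀ i < m, p.coeff i = 0 := by
    by_cases hdz : d = 0
    · intro i hi
      by_contra hne
      have := hE i
      rw [hdz, mul_zero, add_zero, hcval, div_eq_mul_inv] at this
      have h2 : ((i + 1 : ℕ) : F)⁻¹ = ((m + 1 : ℕ) : F)⁻¹ := mul_left_cancel₀ hne this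
      have h3 : ((i + 1 : ℕ) : F) = ((m + 1 : ℕ) : F) := inv_injective h2
      have : i + 1 = m + 1 := Nat.cast_injective h3
      omega
    · exfalso
      have hall : ∀ i, i ≤ m → p.coeff i = 0 := by
        intro i
        induction i with
        | zero => intro _; rcases mul_eq_zero.mp hE0 with h | h
                  · exact h
                  · exact absurd h hdz
        | succ n ih =>
          intro hnm
          have h1 := ih (by omega)
          have h2 := hE n
          rw [h1, zero_div, zero_mul, zero_add] at h2
          rcases mul_eq_zero.mp h2.symm with h | h
          · exact h
          · exact absurd h hdz
      have := hall m le_rfl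
      rw [hmonic.coeff_natDegree] at this
      exact one_ne_zero this
  refine ⟨m, ?_⟩
  have hp0 : (aeval r) p = 0 := minpoly.aeval F r
  rw [aeval_eq_sum_range, ← hm, Finset.sum_range_succ, hmonic.coeff_natDegree, one_smul] at hp0
  rw [Finset.sum_eq_zero (fun i hi => by
    rw [hzero i (Finset.mem_range.mp hi), zero_smul]), zero_add] at hp0
  exact hp0

end

section
variable {F A : Type*} [Field F] [CharZero F] [Ring A] [Algebra F A]

lemma rb_pow_eq_zero [FiniteDimensional F A] (R : A →ₗ[F] A)
    (hR : ∀ x y : A, R x * R y = R (R x * y + x * R y)) :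
    R ^ (2 * Module.finrank F A) = 0 := by
  by_cases hsub : Subsingleton A
  · exact Subsingleton.elim _ _
  have : Nontrivial A := not_subsingleton_iff_nontrivial.mp hsub
  set d := Module.finrank F A with hd
  have hd1 : 0 < d := Module.finrank_pos
  set r := R 1 with hr
  set L : A →ₗ[F] A := LinearMap.mulLeft F r with hL
  -- L is nilpotent, hence L ^ d = 0
  have hLnil : IsNilpotent L := by
    obtain ⟨n, hn⟩ := rb_one_nilpotent R hR
    refine ⟨n, ?_⟩
    rw [hL, LinearMap.pow_mulLeft, show r ^ n = 0 from hn]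
    exact LinearMap.mulLeft_zero_eq_zero _ _
  have hLd : L ^ d = 0 := by
    have hch := IsNilpotent.charpoly_eq_X_pow_finrank hLnil
    have haev : (aeval L) (LinearMap.charpoly L) = 0 := LinearMap.aeval_self_charpoly L
    rw [hch] at haev
    simpa using haev
  -- basic commutation relation
  have hcomm : L * R = R * L + R * R := by
    ext x
    have h1 := rb_one_mul R hR x
    simpa [Module.End.mul_apply, hL, hr, LinearMap.mulLeft_apply] using h1
  -- L * R^k = R^k * L + k • R^(k+1)
  have hLRk : ∀ k : ℕ, L * R ^ k = R ^ k * L + k • R ^ (k + 1) := by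
    intro k
    induction k with
    | zero => simp
    | succ k ih =>
      have h0 : L * R ^ (k + 1) = (L * R ^ k) * R := by
        rw [pow_succ, ← mul_assoc]
      have e1 : R ^ k * (R * L) = R ^ (k + 1) * L := by rw [← mul_assoc, ← pow_succ]
      have e2 : R ^ k * (R * R) = R ^ (k + 1 + 1) := by
        rw [← mul_assoc, ← pow_succ, ← pow_succ]
      have e3 : R ^ (k + 1) * R = R ^ (k + 1 + 1) := (pow_succ _ _).symm
      rw [h0, ih, add_mul, smul_mul_assoc, mul_assoc, hcomm, mul_add, e1, e2, e3, succ_nsmul]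
      abel
  -- iterated commutator with L
  set f : (A →ₗ[F] A) → (A →ₗ[F] A) := fun X => L * X - X * L with hf
  have hIter : ∀ n : ℕ, f^[n] R = n.factorial • R ^ (n + 1) := by
    intro n
    induction n with
    | zero => simp
    | succ n ih =>
      rw [Function.iterate_succ_apply', ih, hf]
      simp only [smul_mul_assoc, mul_smul_comm, ← smul_sub]
      rw [hLRk (n + 1), smul_add, add_sub_cancel_left, smul_smul, Nat.factorial_succ,
        mul_comm (n + 1) n.factorial]
  -- the iterated commutator vanishes at step 2d - 1
  set lop : Module.End F (A →ₗ[F] A) := LinearMap.mulLeft F L with hlop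
  set rop : Module.End F (A →ₗ[F] A) := LinearMap.mulRight F L with hrop
  have hc0 : Commute lop rop := LinearMap.commute_mulLeft_right L L
  letI : Ring (Module.End F (A →ₗ[F] A)) := Module.End.instRing
  have hcommute : Commute lop (-rop) := hc0.neg_right
  have hop : (lop - rop) ^ (2 * d - 1) = 0 := by
    rw [sub_eq_add_neg, hcommute.add_pow]
    apply Finset.sum_eq_zero
    intro i hi
    have hi' : i < 2 * d := by
      have := Finset.mem_range.mp hi; omega
    rcases le_or_gt d i with h | h
    · have hlz : lop ^ i = 0 := by
        rw [hlop, LinearMap.pow_mulLeft, pow_eq_zero_of_le h hLd]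
        exact LinearMap.mulLeft_zero_eq_zero _ _
      rw [hlz, zero_mul, zero_mul]
    · have h2 : d ≤ 2 * d - 1 - i := by omega
      have hrz : rop ^ (2 * d - 1 - i) = 0 := by
        rw [hrop, LinearMap.pow_mulRight, pow_eq_zero_of_le h2 hLd]
        exact LinearMap.mulRight_zero_eq_zero _ _
      have hnr : (-rop) ^ (2 * d - 1 - i) = 0 := by
        rw [neg_pow rop (2 * d - 1 - i), hrz, mul_zero]
      rw [hnr, mul_zero, zero_mul]
  have hiter0 : f^[2 * d - 1] R = 0 := by
    have happ : f^[2 * d - 1] R = ((lop - rop) ^ (2 * d - 1)) R := by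
      rw [Module.End.pow_apply]
      congr 1
    rw [happ, hop]
    rfl
  rw [hIter (2 * d - 1)] at hiter0
  have h2d : 2 * d - 1 + 1 = 2 * d := by omega
  rw [h2d, ← Nat.cast_smul_eq_nsmul F] at hiter0
  rcases smul_eq_zero.mp hiter0 with h | h
  · exact absurd h (Nat.cast_ne_zero.mpr (Nat.factorial_ne_zero _))
  · exact h

end

/-- **Theorem 1.** For a unital associative finite-dimensional algebra `A` over a field `F`
of characteristic zero, there exists `N` such that `R^N = 0` for every Rota–Baxter operator
`R` of weight 0 on `A`. -/
theorem exists_pow_eq_zero_of_rotaBaxter {F A : Type*} [Field F] [CharZero F] [Ring A]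
    [Algebra F A] [FiniteDimensional F A] :
    ∃ N : ℕ, ∀ R : A →ₗ[F] A,
      (∀ x y : A, R x * R y = R (R x * y + x * R y)) → R ^ N = 0 := by
  exact ⟨2 * Module.finrank F A, fun R hR => rb_pow_eq_zero R hR⟩
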